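/- Let G and H be finite simple graphs with the same number of vertices, with G a d-regular graph and H not regular (H has two vertices of different degrees). Then G and H are not singularly cospectral. -/

import Mathlib

open Matrix Polynomial

/-- The real adjacency matrix of a finite simple graph. -/
noncomputable def SimpleGraph.adjMat {V : Type*} [Fintype V] (G : SimpleGraph V) :
    Matrix V V ℝ :=
  letI := Classical.decRel G.Adj
  G.adjMatrix ℝ

/-- The multiset of eigenvalues of the adjacency matrix, counted with multiplicity
(the roots of the characteristic polynomial). -/
noncomputable def SimpleGraph.eigMultiset {V : Type*} [Fintype V] [DecidableEq V]
    (G : SimpleGraph V) : Multiset ℝ :=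
  G.adjMat.charpoly.roots

/-- The multiset of nonzero singular values of a graph, counted with multiplicity:
the nonzero absolute values of the eigenvalues of its adjacency matrix. -/
noncomputable def SimpleGraph.nzSingVals {V : Type*} [Fintype V] [DecidableEq V]
    (G : SimpleGraph V) : Multiset ℝ :=
  (G.eigMultiset.map (fun x => |x|)).filter (fun x => x ≠ 0)

/-- Two graphs are singularly cospectral if their multisets of nonzero singular
values (with multiplicities) coincide. -/
def SingularlyCospectral {V W : Type*} [Fintype V] [DecidableEq V] [Fintype W] [DecidableEq W]
    (G : SimpleGraph V) (H : SimpleGraph W) : Prop :=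
  G.nzSingVals = H.nzSingVals


namespace SingCospAux

variable {n R : Type*} [Fintype n] [DecidableEq n]

lemma charpoly_conj [CommRing R] (U V M : Matrix n n R)
    (h1 : U * V = 1) : (U * M * V).charpoly = M.charpoly := by
  have key : charmatrix (U * M * V)
      = (C : R →+* R[X]).mapMatrix U * charmatrix M * (C : R →+* R[X]).mapMatrix V := by
    rw [charmatrix, charmatrix, mul_sub, sub_mul]
    congr 1
    · rw [← (scalar_commute (X : R[X]) (fun r' => Commute.all _ _) _).eq, Matrix.mul_assoc,
        ← _root_.map_mul, h1, _root_.map_one, Matrix.mul_one]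
    · rw [← _root_.map_mul, ← _root_.map_mul]
  rw [Matrix.charpoly, key, det_mul, det_mul, Matrix.charpoly]
  have h2 : ((C : R →+* R[X]).mapMatrix U).det * ((C : R →+* R[X]).mapMatrix V).det = 1 := by
    rw [← det_mul, ← _root_.map_mul, h1, _root_.map_one, det_one]
  calc ((C : R →+* R[X]).mapMatrix U).det * (charmatrix M).det
        * ((C : R →+* R[X]).mapMatrix V).det
      = (charmatrix M).det * (((C : R →+* R[X]).mapMatrix U).det
        * ((C : R →+* R[X]).mapMatrix V).det) := by ring
    _ = (charmatrix M).det := by rw [h2, mul_one]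

lemma charpoly_diagonal [CommRing R] (f : n → R) :
    (diagonal f).charpoly = ∏ i, (X - C (f i)) := by
  have : charmatrix (diagonal f) = diagonal fun i => X - C (f i) := by
    ext i j
    by_cases h : i = j <;> simp [h, charmatrix, diagonal]
  rw [Matrix.charpoly, this, det_diagonal]

lemma roots_charpoly {A : Matrix n n ℝ} (hA : A.IsHermitian) :
    A.charpoly.roots = Finset.univ.val.map hA.eigenvalues := by
  have h1 : A.charpoly = ∏ i, (X - C (hA.eigenvalues i)) := by
    conv_lhs => rw [hA.spectral_theorem, Unitary.conjStarAlgAut_apply]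
    rw [charpoly_conj _ _ _ (mem_unitaryGroup_iff.mp hA.eigenvectorUnitary.2)]
    rw [show (RCLike.ofReal ∘ hA.eigenvalues : n → ℝ) = hA.eigenvalues from rfl]
    exact charpoly_diagonal _
  rw [h1]
  have h2 : (∏ i, (X - C (hA.eigenvalues i)))
      = ((Finset.univ.val.map hA.eigenvalues).map fun a => X - C a).prod := by
    rw [Multiset.map_map]; rfl
  rw [h2, roots_multiset_prod_X_sub_C]

lemma mul_self_eq {A : Matrix n n ℝ} (hA : A.IsHermitian) :
    A * A = (hA.eigenvectorUnitary : Matrix n n ℝ) *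
      (diagonal (fun i => hA.eigenvalues i ^ 2)) *
      star (hA.eigenvectorUnitary : Matrix n n ℝ) := by
  set U : Matrix n n ℝ := (hA.eigenvectorUnitary : Matrix n n ℝ) with hUdef
  have hU : star U * U = 1 := mem_unitaryGroup_iff'.mp hA.eigenvectorUnitary.2
  have hD : (RCLike.ofReal ∘ hA.eigenvalues : n → ℝ) = hA.eigenvalues := rfl
  conv_lhs => rw [hA.spectral_theorem, Unitary.conjStarAlgAut_apply]
  rw [hD]
  simp only [Matrix.mul_assoc]
  rw [← Matrix.mul_assoc (star U) U, hU, Matrix.one_mul,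
    ← Matrix.mul_assoc (diagonal _) (diagonal _), diagonal_mul_diagonal]
  congr 2
  ext i
  ring

lemma trace_sq {A : Matrix n n ℝ} (hA : A.IsHermitian) :
    (A * A).trace = ∑ i, hA.eigenvalues i ^ 2 := by
  have hU : star (hA.eigenvectorUnitary : Matrix n n ℝ) * (hA.eigenvectorUnitary : Matrix n n ℝ)
      = 1 := mem_unitaryGroup_iff'.mp hA.eigenvectorUnitary.2
  rw [mul_self_eq hA, Matrix.trace_mul_cycle, hU, Matrix.one_mul, trace_diagonal]

lemma posSemidef_aux {A : Matrix n n ℝ} (hA : A.IsHermitian) {c : ℝ}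
    (hc : ∀ i, |hA.eigenvalues i| ≤ c) :
    Matrix.PosSemidef (c ^ 2 • (1 : Matrix n n ℝ) - A * A) := by
  set U : Matrix n n ℝ := (hA.eigenvectorUnitary : Matrix n n ℝ) with hUdef
  have h1 : U * star U = 1 := mem_unitaryGroup_iff.mp hA.eigenvectorUnitary.2
  have key : c ^ 2 • (1 : Matrix n n ℝ) - A * A
      = U * (diagonal fun i => c ^ 2 - hA.eigenvalues i ^ 2) * star U := by
    have e1 : (diagonal fun i => c ^ 2 - hA.eigenvalues i ^ 2)
        = c ^ 2 • (1 : Matrix n n ℝ) - diagonal fun i => hA.eigenvalues i ^ 2 := by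
      ext i j
      by_cases h : i = j <;> simp [h, Matrix.one_apply]
    rw [e1, Matrix.mul_sub, Matrix.sub_mul, ← mul_self_eq hA]
    congr 1
    rw [Matrix.mul_smul, Matrix.mul_one, Matrix.smul_mul, h1]
  rw [key]
  have hpsd : Matrix.PosSemidef (diagonal fun i => c ^ 2 - hA.eigenvalues i ^ 2) := by
    refine Matrix.PosSemidef.diagonal fun i => ?_
    show (0:ℝ) ≤ c ^ 2 - hA.eigenvalues i ^ 2
    have h := hc i
    have h2 : hA.eigenvalues i ^ 2 ≤ c ^ 2 := by
      have := abs_nonneg (hA.eigenvalues i)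
      nlinarith [sq_abs (hA.eigenvalues i)]
    linarith
  simpa [Matrix.star_eq_conjTranspose] using hpsd.mul_mul_conjTranspose_same U

lemma eig_bound {A : Matrix n n ℝ} {d : ℝ} (h0 : ∀ v w, 0 ≤ A v w)
    (hrow : ∀ v, ∑ w, A v w ≤ d) {μ : ℝ} {x : n → ℝ} (hx : x ≠ 0)
    (hAx : A *ᵥ x = μ • x) : |μ| ≤ d := by
  obtain ⟨v0, hv0⟩ := Function.ne_iff.mp hx
  obtain ⟨v, -, hv⟩ := Finset.exists_max_image Finset.univ (fun w => |x w|)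
    ⟨v0, Finset.mem_univ _⟩
  have hxv : 0 < |x v| := lt_of_lt_of_le (abs_pos.mpr hv0) (hv v0 (Finset.mem_univ _))
  have h1 : |(A *ᵥ x) v| = |μ| * |x v| := by
    rw [hAx]; simp [abs_mul]
  have h2 : |(A *ᵥ x) v| ≤ d * |x v| := by
    calc |(A *ᵥ x) v| = |∑ w, A v w * x w| := by simp [Matrix.mulVec, dotProduct]
      _ ≤ ∑ w, |A v w * x w| := Finset.abs_sum_le_sum_abs _ _
      _ = ∑ w, A v w * |x w| := by
          refine Finset.sum_congr rfl fun w _ => ?_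
          rw [abs_mul, abs_of_nonneg (h0 v w)]
      _ ≤ ∑ w, A v w * |x v| := Finset.sum_le_sum fun w _ =>
          mul_le_mul_of_nonneg_left (hv w (Finset.mem_univ _)) (h0 v w)
      _ = (∑ w, A v w) * |x v| := by rw [Finset.sum_mul]
      _ ≤ d * |x v| := mul_le_mul_of_nonneg_right (hrow v) (abs_nonneg _)
  exact le_of_mul_le_mul_right (h1 ▸ h2) hxv

lemma sum_sq_filter (s : Multiset ℝ) :
    ((((s.map fun x => |x|).filter fun x => x ≠ 0).map fun x => x ^ 2)).sum
      = (s.map fun x => x ^ 2).sum := by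
  have h1 : (s.map fun x => |x|).map (fun x => x ^ 2) = s.map fun x => x ^ 2 := by
    rw [Multiset.map_map]
    exact Multiset.map_congr rfl fun x _ => sq_abs x
  conv_rhs => rw [← h1, ← Multiset.filter_add_not (fun x => x ≠ 0) (s.map fun x => |x|)]
  rw [Multiset.map_add, Multiset.sum_add]
  have h2 : ((((s.map fun x => |x|).filter fun x => ¬ x ≠ 0).map fun x => x ^ 2)).sum = 0 := by
    refine Multiset.sum_eq_zero fun y hy => ?_
    obtain ⟨z, hz, rfl⟩ := Multiset.mem_map.mp hy
    have := Multiset.of_mem_filter hz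
    simp [not_not.mp this]
  rw [h2, add_zero]

end SingCospAux

namespace SingCospAux

lemma adjMat_eq {V : Type*} [Fintype V] (G : SimpleGraph V) [DecidableRel G.Adj] :
    G.adjMat = G.adjMatrix ℝ := by
  ext v w
  by_cases h : G.Adj v w <;> simp [SimpleGraph.adjMat, h]

lemma adj_isHermitian {V : Type*} [Fintype V] (G : SimpleGraph V)
    [DecidableRel G.Adj] : (G.adjMatrix ℝ).IsHermitian := by
  ext v w
  by_cases h : G.Adj v w
  · simp [Matrix.conjTranspose_apply, h, h.symm]
  · have h' : ¬ G.Adj w v := fun hh => h hh.symm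
    simp [Matrix.conjTranspose_apply, h, h']

end SingCospAux

open SingCospAux in
/-- If `G` and `H` have the same number of vertices, `G` is `d`-regular and `H` is not
regular (it has two vertices of different degrees), then `G` and `H` are not singularly
cospectral. -/
theorem not_singularlyCospectral_of_regular_of_not_regular
    {V W : Type*} [Fintype V] [DecidableEq V] [Fintype W] [DecidableEq W]
    (G : SimpleGraph V) (H : SimpleGraph W) [DecidableRel G.Adj] [DecidableRel H.Adj]
    (hcard : Fintype.card V = Fintype.card W)
    (d : ℕ) (hG : G.IsRegularOfDegree d)
    (hH : ∃ v w : W, H.degree v ≠ H.degree w) :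
    ¬ SingularlyCospectral G H := by
  intro hcos
  have hcos' : G.nzSingVals = H.nzSingVals := hcos
  have hA : (G.adjMatrix ℝ).IsHermitian := adj_isHermitian G
  have hB : (H.adjMatrix ℝ).IsHermitian := adj_isHermitian H
  have hGe : G.eigMultiset = Finset.univ.val.map hA.eigenvalues := by
    rw [SimpleGraph.eigMultiset, adjMat_eq, roots_charpoly hA]
  have hHe : H.eigMultiset = Finset.univ.val.map hB.eigenvalues := by
    rw [SimpleGraph.eigMultiset, adjMat_eq, roots_charpoly hB]
  -- sum of squares of eigenvalues agree
  have hsumGH : ∑ i, hA.eigenvalues i ^ 2 = ∑ i, hB.eigenvalues i ^ 2 := by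
    have h1 : (∑ i, hA.eigenvalues i ^ 2)
        = ((Finset.univ.val.map hA.eigenvalues).map fun x => x ^ 2).sum := by
      rw [Multiset.map_map]; rfl
    have h2 : (∑ i, hB.eigenvalues i ^ 2)
        = ((Finset.univ.val.map hB.eigenvalues).map fun x => x ^ 2).sum := by
      rw [Multiset.map_map]; rfl
    rw [h1, h2, ← hGe, ← hHe, ← sum_sq_filter G.eigMultiset, ← sum_sq_filter H.eigMultiset]
    exact congrArg (fun s => (Multiset.map (fun x => x ^ 2) s).sum) hcos'
  -- traces
  have htrG : (G.adjMatrix ℝ * G.adjMatrix ℝ).trace = (Fintype.card V : ℝ) * d := by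
    rw [Matrix.trace]
    have e : ∀ v : V, (G.adjMatrix ℝ * G.adjMatrix ℝ).diag v = (d : ℝ) := by
      intro v
      rw [Matrix.diag_apply, SimpleGraph.adjMatrix_mul_self_apply_self, hG v]
    rw [Finset.sum_congr rfl fun v _ => e v, Finset.sum_const, nsmul_eq_mul, Finset.card_univ]
  have htrH : (H.adjMatrix ℝ * H.adjMatrix ℝ).trace = ∑ v, (H.degree v : ℝ) := by
    rw [Matrix.trace]
    refine Finset.sum_congr rfl fun v _ => ?_
    rw [Matrix.diag_apply, SimpleGraph.adjMatrix_mul_self_apply_self]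
  -- eigenvalue bounds for G
  have hboundA : ∀ j, |hA.eigenvalues j| ≤ (d : ℝ) := by
    intro j
    have hxne : (⇑(hA.eigenvectorBasis j) : V → ℝ) ≠ 0 := by
      intro h
      exact hA.eigenvectorBasis.orthonormal.ne_zero j (by ext v; exact congrFun h v)
    refine eig_bound (fun v w => ?_) (fun v => ?_) hxne (hA.mulVec_eigenvectorBasis j)
    · rw [SimpleGraph.adjMatrix_apply]
      split <;> norm_num
    · have h1 : (∑ w, G.adjMatrix ℝ v w) = ∑ u ∈ G.neighborFinset v, (1 : ℝ) := by
        simpa [dotProduct] using G.adjMatrix_dotProduct v (fun _ => (1 : ℝ))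
      rw [h1, Finset.sum_const, nsmul_eq_mul, mul_one,
        SimpleGraph.card_neighborFinset_eq_degree, hG v]
  -- eigenvalue bounds for H
  have hboundB : ∀ i, |hB.eigenvalues i| ≤ (d : ℝ) := by
    intro i
    by_cases h0 : hB.eigenvalues i = 0
    · simp [h0]
    · have hmem : |hB.eigenvalues i| ∈ H.nzSingVals := by
        refine Multiset.mem_filter.mpr ⟨?_, by simpa using h0⟩
        refine Multiset.mem_map.mpr ⟨hB.eigenvalues i, ?_, rfl⟩
        rw [hHe]
        exact Multiset.mem_map.mpr ⟨i, Finset.mem_val.mpr (Finset.mem_univ i), rfl⟩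
      rw [← hcos'] at hmem
      have hmem2 : |hB.eigenvalues i| ∈ G.eigMultiset.map fun x => |x| :=
        (Multiset.mem_filter.mp hmem).1
      rw [hGe] at hmem2
      obtain ⟨y, hy, heq⟩ := Multiset.mem_map.mp hmem2
      obtain ⟨j, hj, rfl⟩ := Multiset.mem_map.mp hy
      rw [← heq]
      exact hboundA j
  -- positive semidefiniteness and the quadratic form at the all-ones vector
  have hpsd := posSemidef_aux hB hboundB
  set y : W → ℝ := fun _ => 1 with hy
  have hstar : star y = y := by funext v; simp [hy]
  have hBy : (H.adjMatrix ℝ) *ᵥ y = fun v => (H.degree v : ℝ) := by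
    funext v
    rw [SimpleGraph.adjMatrix_mulVec_apply]
    simp [hy, SimpleGraph.card_neighborFinset_eq_degree]
  have hyBy : y ⬝ᵥ ((H.adjMatrix ℝ * H.adjMatrix ℝ) *ᵥ y) = ∑ v, (H.degree v : ℝ) ^ 2 := by
    rw [← Matrix.mulVec_mulVec, hBy, Matrix.dotProduct_mulVec]
    have hyB : Matrix.vecMul y (H.adjMatrix ℝ) = fun v => (H.degree v : ℝ) := by
      funext v
      rw [SimpleGraph.adjMatrix_vecMul_apply]
      simp [hy, SimpleGraph.card_neighborFinset_eq_degree]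
    rw [hyB, dotProduct]
    exact Finset.sum_congr rfl fun v _ => (sq ((H.degree v : ℝ))).symm
  have hq : y ⬝ᵥ ((((d : ℝ) ^ 2 • (1 : Matrix W W ℝ)) - H.adjMatrix ℝ * H.adjMatrix ℝ) *ᵥ y)
      = (Fintype.card W : ℝ) * (d : ℝ) ^ 2 - ∑ v, (H.degree v : ℝ) ^ 2 := by
    rw [Matrix.sub_mulVec, dotProduct_sub, hyBy]
    congr 1
    rw [Matrix.smul_mulVec, Matrix.one_mulVec, dotProduct_smul]
    have : y ⬝ᵥ y = (Fintype.card W : ℝ) := by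
      simp [dotProduct, hy, Finset.card_univ]
    rw [this, smul_eq_mul, mul_comm]
  have hineq : ∑ v, (H.degree v : ℝ) ^ 2 ≤ (Fintype.card W : ℝ) * (d : ℝ) ^ 2 := by
    have h2 := hpsd.dotProduct_mulVec_nonneg y
    rw [hstar, hq] at h2
    linarith
  -- sum of degrees of H
  have hdegsum : ∑ v, (H.degree v : ℝ) = (Fintype.card W : ℝ) * d := by
    rw [← htrH, trace_sq hB, ← hsumGH, ← trace_sq hA, htrG, hcard]
  -- a vertex of degree ≠ d
  have hex : ∃ v, (H.degree v : ℝ) ≠ (d : ℝ) := by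
    by_contra hno
    push_neg at hno
    obtain ⟨v1, w1, hvw⟩ := hH
    exact hvw (by rw [Nat.cast_inj.mp (hno v1), Nat.cast_inj.mp (hno w1)])
  have hpos : 0 < ∑ v, ((H.degree v : ℝ) - d) ^ 2 := by
    obtain ⟨v2, hv2⟩ := hex
    refine Finset.sum_pos' (fun v _ => sq_nonneg _) ⟨v2, Finset.mem_univ _, ?_⟩
    exact sq_pos_of_ne_zero (sub_ne_zero.mpr hv2)
  have hexp : ∑ v, ((H.degree v : ℝ) - d) ^ 2
      = (∑ v, (H.degree v : ℝ) ^ 2) - 2 * (d : ℝ) * (∑ v, (H.degree v : ℝ))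
        + (Fintype.card W : ℝ) * (d : ℝ) ^ 2 := by
    rw [Finset.sum_congr rfl (fun v _ => by ring :
      ∀ v ∈ Finset.univ, ((H.degree v : ℝ) - d) ^ 2
        = (H.degree v : ℝ) ^ 2 - 2 * (d : ℝ) * (H.degree v : ℝ) + (d : ℝ) ^ 2)]
    rw [Finset.sum_add_distrib, Finset.sum_sub_distrib, ← Finset.mul_sum, Finset.sum_const,
      nsmul_eq_mul, Finset.card_univ]
  rw [hexp, hdegsum] at hpos
  nlinarith [hineq, hpos]
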